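/- Let A2 be a stable matrix (spectral radius < 1), A1 anti-stable, and suppose T solves T·A1 − A2·T = A3 and D1 + D2·T = 0. Then for all initial conditions, the output z(t) = D1·x1(t) + D2·x2(t) of the system x1(t+1) = A1·x1(t), x2(t+1) = A2·x2(t) + A3·x1(t) converges to 0 as t → ∞. -/

import Mathlib

open Matrix Filter

def IsStable {n : Type*} [Fintype n] [DecidableEq n] (M : Matrix n n ℝ) : Prop :=
  ∀ μ ∈ spectrum ℂ (M.map (algebraMap ℝ ℂ)), ‖μ‖ < 1

def IsAntiStable {n : Type*} [Fintype n] [DecidableEq n] (M : Matrix n n ℝ) : Prop :=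
  ∀ μ ∈ spectrum ℂ (M.map (algebraMap ℝ ℂ)), 1 ≤ ‖μ‖

section aux

attribute [local instance] Matrix.linftyOpNormedRing Matrix.linftyOpNormedAlgebra

private lemma entry_nnnorm_le' {n : ℕ} (M : Matrix (Fin n) (Fin n) ℂ) (i j : Fin n) :
    ‖M i j‖₊ ≤ ‖M‖₊ := by
  have h1 : ‖M i j‖₊ ≤ ∑ k, ‖M i k‖₊ :=
    Finset.single_le_sum (f := fun k => ‖M i k‖₊) (fun _ _ => zero_le) (Finset.mem_univ j)
  refine h1.trans ?_
  rw [Matrix.linfty_opNNNorm_def]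
  exact Finset.le_sup (f := fun i => ∑ k, ‖M i k‖₊) (Finset.mem_univ i)

private lemma pow_norm_tendsto_zero' {n : ℕ} (M : Matrix (Fin n) (Fin n) ℂ)
    (h : ∀ μ ∈ spectrum ℂ M, ‖μ‖ < 1) :
    Tendsto (fun t => ‖M ^ t‖) atTop (nhds 0) := by
  rcases Nat.eq_zero_or_pos n with hn | hn
  · subst hn
    have hz : ∀ t, (M ^ t : Matrix (Fin 0) (Fin 0) ℂ) = 0 := fun t => Subsingleton.elim _ _
    simp only [hz, norm_zero]
    exact tendsto_const_nhds
  · haveI : Nonempty (Fin n) := ⟨⟨0, hn⟩⟩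
    have hρ : spectralRadius ℂ M < 1 := by
      have := spectrum.spectralRadius_lt_of_forall_lt M
        (r := 1) (fun z hz => by simpa [← NNReal.coe_lt_coe] using h z hz)
      simpa using this
    obtain ⟨r, hr1, hr2⟩ := ENNReal.lt_iff_exists_nnreal_btwn.mp hρ
    have hr2' : r < 1 := by exact_mod_cast hr2
    have hgel := spectrum.pow_nnnorm_pow_one_div_tendsto_nhds_spectralRadius M
    have hev : ∀ᶠ t : ℕ in atTop, (‖M ^ t‖₊ : ENNReal) ^ (1 / (t : ℝ)) < r :=
      hgel.eventually_lt_const hr1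
    have hbound : ∀ᶠ t : ℕ in atTop, ‖M ^ t‖ ≤ (r : ℝ) ^ t := by
      filter_upwards [hev, eventually_ge_atTop 1] with t ht ht1
      have htpos : (0 : ℝ) < t := by exact_mod_cast ht1
      have := ENNReal.rpow_le_rpow ht.le (le_of_lt htpos)
      have this2 : (‖M ^ t‖₊ : ENNReal) ≤ (r : ENNReal) ^ (t : ℝ) := by
        calc (‖M ^ t‖₊ : ENNReal) = ((‖M ^ t‖₊ : ENNReal) ^ (1 / (t:ℝ))) ^ (t:ℝ) := by
              rw [← ENNReal.rpow_mul, one_div, inv_mul_cancel₀ (ne_of_gt htpos),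
                ENNReal.rpow_one]
          _ ≤ (r : ENNReal) ^ (t : ℝ) := this
      rw [ENNReal.rpow_natCast, ← ENNReal.coe_pow, ENNReal.coe_le_coe] at this2
      calc ‖M ^ t‖ = ((‖M ^ t‖₊ : NNReal) : ℝ) := rfl
        _ ≤ ((r ^ t : NNReal) : ℝ) := by exact_mod_cast this2
        _ = (r : ℝ) ^ t := by push_cast; ring
    have hlim : Tendsto (fun t : ℕ => (r : ℝ) ^ t) atTop (nhds 0) :=
      tendsto_pow_atTop_nhds_zero_of_lt_one r.coe_nonneg hr2'
    exact squeeze_zero_norm' (by filter_upwards [hbound] with t ht; simpa using ht) hlim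

/-- Entries of powers of a stable real matrix tend to zero (scalar statement,
instance-safe to use outside this section). -/
lemma entries_pow_tendsto_zero {n : ℕ} (M : Matrix (Fin n) (Fin n) ℝ)
    (h : ∀ μ ∈ spectrum ℂ (M.map (algebraMap ℝ ℂ)), ‖μ‖ < 1) (i j : Fin n) :
    Tendsto (fun t => (M ^ t) i j) atTop (nhds 0) := by
  have hnorm := pow_norm_tendsto_zero' (M.map (algebraMap ℝ ℂ)) h
  have key : ∀ t, |(M ^ t) i j| ≤ ‖(M.map (algebraMap ℝ ℂ)) ^ t‖ := by
    intro t
    have hmap : (M ^ t).map (algebraMap ℝ ℂ) = (M.map (algebraMap ℝ ℂ)) ^ t := by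
      simpa using (algebraMap ℝ ℂ).mapMatrix.map_pow M t
    calc |(M ^ t) i j| = ‖((M.map (algebraMap ℝ ℂ)) ^ t) i j‖ := by
          rw [← hmap, Matrix.map_apply]; simp
      _ ≤ ‖(M.map (algebraMap ℝ ℂ)) ^ t‖ := entry_nnnorm_le' _ i j
  exact squeeze_zero_norm (fun t => by simpa using key t) hnorm

end aux

theorem stmt2 {n1 n2 p : ℕ}
    (A1 : Matrix (Fin n1) (Fin n1) ℝ) (A2 : Matrix (Fin n2) (Fin n2) ℝ)
    (A3 : Matrix (Fin n2) (Fin n1) ℝ)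
    (D1 : Matrix (Fin p) (Fin n1) ℝ) (D2 : Matrix (Fin p) (Fin n2) ℝ)
    (T : Matrix (Fin n2) (Fin n1) ℝ)
    (hA1 : IsAntiStable A1) (hA2 : IsStable A2)
    (hT : T * A1 - A2 * T = A3) (hD : D1 + D2 * T = 0)
    (x1 : ℕ → Fin n1 → ℝ) (x2 : ℕ → Fin n2 → ℝ)
    (hx1 : ∀ t, x1 (t + 1) = A1.mulVec (x1 t))
    (hx2 : ∀ t, x2 (t + 1) = A2.mulVec (x2 t) + A3.mulVec (x1 t)) :
    Tendsto (fun t => D1.mulVec (x1 t) + D2.mulVec (x2 t)) atTop (nhds 0) := by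
  set e : ℕ → Fin n2 → ℝ := fun t => x2 t - T.mulVec (x1 t) with he
  have herec : ∀ t, e (t + 1) = A2.mulVec (e t) := by
    intro t
    have hA3 : A3 = T * A1 - A2 * T := hT.symm
    simp only [he, hx1, hx2, hA3, Matrix.sub_mulVec, Matrix.mulVec_mulVec,
      Matrix.mulVec_sub]
    abel
  have hepow : ∀ t, e t = (A2 ^ t).mulVec (e 0) := by
    intro t
    induction t with
    | zero => simp
    | succ t ih => rw [herec t, ih, Matrix.mulVec_mulVec, pow_succ']
  have hz : ∀ t, D1.mulVec (x1 t) + D2.mulVec (x2 t) = D2.mulVec (e t) := by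
    intro t
    have hDT : D2 * T = -D1 := by
      have := hD
      rwa [add_eq_zero_iff_eq_neg'] at this
    simp only [he, Matrix.mulVec_sub, Matrix.mulVec_mulVec, hDT, Matrix.neg_mulVec]
    abel
  have hzep : ∀ t, D1.mulVec (x1 t) + D2.mulVec (x2 t)
      = D2.mulVec ((A2 ^ t).mulVec (e 0)) := fun t => by rw [hz t, hepow t]
  simp only [hzep]
  have hcont : Continuous fun M : Matrix (Fin n2) (Fin n2) ℝ =>
      D2.mulVec (M.mulVec (e 0)) :=
    Continuous.matrix_mulVec continuous_const (continuous_id.matrix_mulVec continuous_const)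
  have hpow : Tendsto (fun t => A2 ^ t) atTop (nhds 0) := by
    refine tendsto_pi_nhds.mpr ?_
    intro i
    rw [tendsto_pi_nhds]
    intro j
    simpa using entries_pow_tendsto_zero A2 hA2 i j
  have hfin := (hcont.tendsto 0).comp hpow
  have h0 : D2.mulVec ((0 : Matrix (Fin n2) (Fin n2) ℝ).mulVec (e 0)) = 0 := by
    rw [Matrix.zero_mulVec, Matrix.mulVec_zero]
  rw [h0] at hfin
  exact hfin
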